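/- Let p_i and p_* be real numbers with 0 < p_i < p_* < 1. Then log((1 − p_i)/(1 − p_*)) / log((p_*·(1 − p_i))/(p_i·(1 − p_*))) < p_*, where the denominator log((p_*·(1 − p_i))/(p_i·(1 − p_*))) is strictly positive. -/

import Mathlib

/-- For `0 < p_i < p_* < 1`, the threshold fraction
`log((1−p_i)/(1−p_*)) / log((p_*(1−p_i))/(p_i(1−p_*)))` is strictly below `p_*`,
and the denominator is strictly positive. -/
theorem stmt14 (pi pstar : ℝ) (h0 : 0 < pi) (h1 : pi < pstar) (h2 : pstar < 1) :
    0 < Real.log ((pstar * (1 - pi)) / (pi * (1 - pstar))) ∧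
    Real.log ((1 - pi) / (1 - pstar))
        / Real.log ((pstar * (1 - pi)) / (pi * (1 - pstar))) < pstar := by
  have hpi1 : pi < 1 := h1.trans h2
  have hps : 0 < pstar := h0.trans h1
  have h1pi : 0 < 1 - pi := by linarith
  have h1ps : 0 < 1 - pstar := by linarith
  have hden : 0 < pi * (1 - pstar) := by positivity
  have hlt : pi * (1 - pstar) < pstar * (1 - pi) := by nlinarith
  have hD : 0 < Real.log ((pstar * (1 - pi)) / (pi * (1 - pstar))) :=
    Real.log_pos ((one_lt_div hden).2 hlt)
  refine ⟨hD, ?_⟩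
  rw [div_lt_iff₀ hD]
  have e1 : Real.log ((pstar * (1 - pi)) / (pi * (1 - pstar))) =
      Real.log pstar - Real.log pi + (Real.log (1 - pi) - Real.log (1 - pstar)) := by
    rw [Real.log_div (by positivity) (by positivity), Real.log_mul hps.ne' h1pi.ne',
      Real.log_mul h0.ne' h1ps.ne']
    ring
  have e2 : Real.log ((1 - pi) / (1 - pstar)) = Real.log (1 - pi) - Real.log (1 - pstar) :=
    Real.log_div h1pi.ne' h1ps.ne'
  rw [e1, e2]
  have k1 : Real.log (pi / pstar) < pi / pstar - 1 :=
    Real.log_lt_sub_one_of_pos (by positivity) ((div_lt_one hps).2 h1).ne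
  have k2 : Real.log ((1 - pi) / (1 - pstar)) ≤ (1 - pi) / (1 - pstar) - 1 :=
    Real.log_le_sub_one_of_pos (by positivity)
  rw [Real.log_div h0.ne' hps.ne'] at k1
  rw [e2] at k2
  have d1 : pi / pstar - 1 = (pi - pstar) / pstar := by field_simp
  have d2 : (1 - pi) / (1 - pstar) - 1 = (pstar - pi) / (1 - pstar) := by
    field_simp
    ring
  rw [d1] at k1
  rw [d2] at k2
  have m1 : pstar * (Real.log pi - Real.log pstar) < pi - pstar := by
    have := (mul_lt_mul_of_pos_left k1 hps)
    rwa [mul_div_cancel₀ _ hps.ne'] at this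
  have m2 : (1 - pstar) * (Real.log (1 - pi) - Real.log (1 - pstar)) ≤ pstar - pi := by
    have := mul_le_mul_of_nonneg_left k2 h1ps.le
    rwa [mul_div_cancel₀ _ h1ps.ne'] at this
  nlinarith
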